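/- The uniform deviation function Φ(A,B) = sup_{x ∈ X} |f(x) − (Aᵀ G(x))/(Bᵀ H(x))| is quasiconvex on the set D = {(A,B) : Bᵀ H(x) > 0 for all x ∈ X}, where X is a nonempty set. -/
import Mathlib


/-- The uniform deviation `Φ(A,B) = sup_{x∈X} |f x − (AᵀG x)/(BᵀH x)|` is quasiconvex on
`D = {(A,B) : BᵀH x > 0 for all x}`, assuming the supremum is finite on `D`. -/
theorem stmt_1 {ι : Type*} [Nonempty ι] (n m : ℕ) (f : ι → ℝ)
    (G : ι → Fin (n + 1) → ℝ) (H : ι → Fin (m + 1) → ℝ)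
    (D : Set ((Fin (n + 1) → ℝ) × (Fin (m + 1) → ℝ)))
    (hD : D = {p | ∀ x, 0 < ∑ j, p.2 j * H x j})
    (hbdd : ∀ p ∈ D, BddAbove (Set.range fun x =>
      |f x - (∑ i, p.1 i * G x i) / (∑ j, p.2 j * H x j)|)) :
    QuasiconvexOn ℝ D
      (fun p => ⨆ x, |f x - (∑ i, p.1 i * G x i) / (∑ j, p.2 j * H x j)|) := by
  subst hD
  intro r
  rintro p ⟨hp1, hp2⟩ q ⟨hq1, hq2⟩ a b ha hb hab
  have hpx := (ciSup_le_iff (hbdd p hp1)).mp hp2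
  have hqx := (ciSup_le_iff (hbdd q hq1)).mp hq2
  have hnum : ∀ x, ∑ i, (a • p + b • q).1 i * G x i
      = a * (∑ i, p.1 i * G x i) + b * (∑ i, q.1 i * G x i) := by
    intro x
    simp only [Prod.fst_add, Prod.smul_fst, Pi.add_apply, Pi.smul_apply, smul_eq_mul,
      add_mul, mul_assoc]
    rw [Finset.sum_add_distrib, Finset.mul_sum, Finset.mul_sum]
  have hden : ∀ x, ∑ j, (a • p + b • q).2 j * H x j
      = a * (∑ j, p.2 j * H x j) + b * (∑ j, q.2 j * H x j) := by
    intro x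
    simp only [Prod.snd_add, Prod.smul_snd, Pi.add_apply, Pi.smul_apply, smul_eq_mul,
      add_mul, mul_assoc]
    rw [Finset.sum_add_distrib, Finset.mul_sum, Finset.mul_sum]
  have hpos : ∀ x, 0 < a * (∑ j, p.2 j * H x j) + b * (∑ j, q.2 j * H x j) := by
    intro x
    have hdp := hp1 x
    have hdq := hq1 x
    set dp := ∑ j, p.2 j * H x j
    set dq := ∑ j, q.2 j * H x j
    have hm : 0 < min dp dq := lt_min hdp hdq
    nlinarith [mul_le_mul_of_nonneg_left (min_le_left dp dq) ha,
      mul_le_mul_of_nonneg_left (min_le_right dp dq) hb]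
  refine ⟨fun x => by rw [hden x]; exact hpos x, ?_⟩
  refine ciSup_le fun x => ?_
  rw [hnum x, hden x]
  have hdp := hp1 x
  have hdq := hq1 x
  set dp := ∑ j, p.2 j * H x j with hdpdef
  set dq := ∑ j, q.2 j * H x j with hdqdef
  set np := ∑ i, p.1 i * G x i with hnpdef
  set nq := ∑ i, q.1 i * G x i with hnqdef
  have key1 : |f x * dp - np| ≤ r * dp := by
    have h1 : f x - np / dp = (f x * dp - np) / dp := by field_simp
    have h2 := hpx x
    rw [show |f x - np / dp| = |f x * dp - np| / dp by
      rw [h1, abs_div, abs_of_pos hdp]] at h2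
    exact (div_le_iff₀ hdp).mp h2
  have key2 : |f x * dq - nq| ≤ r * dq := by
    have h1 : f x - nq / dq = (f x * dq - nq) / dq := by field_simp
    have h2 := hqx x
    rw [show |f x - nq / dq| = |f x * dq - nq| / dq by
      rw [h1, abs_div, abs_of_pos hdq]] at h2
    exact (div_le_iff₀ hdq).mp h2
  have hDn : 0 < a * dp + b * dq := hpos x
  have heq : f x - (a * np + b * nq) / (a * dp + b * dq)
      = (a * (f x * dp - np) + b * (f x * dq - nq)) / (a * dp + b * dq) := by
    field_simp
    ring
  rw [heq, abs_div, abs_of_pos hDn, div_le_iff₀ hDn]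
  calc |a * (f x * dp - np) + b * (f x * dq - nq)|
      ≤ |a * (f x * dp - np)| + |b * (f x * dq - nq)| := abs_add_le _ _
    _ = a * |f x * dp - np| + b * |f x * dq - nq| := by
        rw [abs_mul, abs_mul, abs_of_nonneg ha, abs_of_nonneg hb]
    _ ≤ a * (r * dp) + b * (r * dq) :=
        add_le_add (mul_le_mul_of_nonneg_left key1 ha) (mul_le_mul_of_nonneg_left key2 hb)
    _ = r * (a * dp + b * dq) := by ring
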